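/- Let m be the measure on the Borel σ-algebra of ℝ^ℕ defined by m(A) = sup_k μ_k(A ∩ ℝ_I^k), where I = [−1/2,1/2], ℝ_I^k = {x ∈ ℝ^ℕ : x_i ∈ I for all i > k}, and μ_k is the product of k-dimensional Lebesgue measure on the first k coordinates with the countable product of uniform probability measures on I on the remaining coordinates. Then m is σ-finite: there exists a countable family {A_j} of Borel sets with m(A_j) < ∞ for each j and a Borel set N with m(N) = 0 such that ℝ^ℕ = (⋃_j A_j) ∪ N. -/

import Mathlib

open MeasureTheory
open scoped ENNReal

/-- The interval `I = [-1/2, 1/2]`. -/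
def Icube : Set ℝ := Set.Icc (-(1 / 2) : ℝ) (1 / 2)

/-- `ℝ_I^k`: the sequences whose coordinates beyond the first `k` lie in `I`. -/
def RIn (k : ℕ) : Set (ℕ → ℝ) := {x | ∀ i, k ≤ i → x i ∈ Icube}

/-- `μₖ` is the product of `k`-dimensional Lebesgue measure on the first `k`
coordinates with the countable product of copies of the uniform probability measure
on `I = [-1/2, 1/2]` (one-dimensional Lebesgue measure restricted to `I`) on the
remaining coordinates.  This is characterized (uniquely, by the π-system of
measurable cylinders together with the σ-finite exhaustion by cylinders with bounded
first `k` coordinates) by the product formula on measurable cylinders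
`{x | ∀ i < m, x i ∈ A i}` for `m ≥ k`. -/
def IsProdWithUniform (k : ℕ) (μk : Measure (ℕ → ℝ)) : Prop :=
  ∀ m : ℕ, k ≤ m → ∀ A : ℕ → Set ℝ, (∀ i, MeasurableSet (A i)) →
    μk {x | ∀ i, i < m → x i ∈ A i} =
      (∏ i ∈ Finset.range k, volume (A i)) * ∏ i ∈ Finset.Ico k m, volume (A i ∩ Icube)

/-- The set function `m(A) = sup_k μₖ(A ∩ ℝ_I^k)`. -/
noncomputable def mSup (μ : ℕ → Measure (ℕ → ℝ)) (A : Set (ℕ → ℝ)) : ℝ≥0∞ :=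
  ⨆ k, μ k (A ∩ RIn k)

def Bset (n k i : ℕ) : Set ℝ := if i < k then Set.Icc (-(n + 1 : ℝ)) (n + 1) else Icube

lemma Icube_subset_Bset (n k i : ℕ) : Icube ⊆ Bset n k i := by
  unfold Bset
  split
  · intro y hy
    have h1 : -(1/2:ℝ) ≤ y := hy.1
    have h2 : y ≤ (1/2:ℝ) := hy.2
    have h0 : (0:ℝ) ≤ (n:ℝ) := Nat.cast_nonneg n
    exact ⟨by linarith, by linarith⟩
  · exact subset_rfl

lemma Bset_measurable (n k i : ℕ) : MeasurableSet (Bset n k i) := by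
  unfold Bset; split
  · exact measurableSet_Icc
  · exact measurableSet_Icc

lemma vol_Icube : volume Icube = 1 := by
  simp [Icube, Real.volume_Icc]
  norm_num

lemma vol_Bset_inter : ∀ n k i, volume (Bset n k i ∩ Icube) = 1 := by
  intro n k i
  rw [Set.inter_eq_self_of_subset_right (Icube_subset_Bset n k i)]
  exact vol_Icube

lemma vol_Bset (n k i : ℕ) :
    volume (Bset n k i) = if i < k then ENNReal.ofReal (2 * (n + 1)) else 1 := by
  unfold Bset
  split
  · rw [Real.volume_Icc]; ring_nf
  · exact vol_Icube

lemma mu_bound (μ : ℕ → Measure (ℕ → ℝ)) (hμ : ∀ k, IsProdWithUniform k (μ k)) (n k j : ℕ) :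
    μ j ({x | ∀ i, x i ∈ Bset n k i} ∩ RIn j) ≤ (ENNReal.ofReal (2 * (n + 1))) ^ k := by
  set c := ENNReal.ofReal (2 * (n + 1)) with hc
  have hc1 : (1:ℝ≥0∞) ≤ c := by
    rw [hc, ENNReal.one_le_ofReal]
    have : (0:ℝ) ≤ (n:ℝ) := Nat.cast_nonneg n
    linarith
  set m := max j k with hm
  have h1 : {x : ℕ → ℝ | ∀ i, x i ∈ Bset n k i} ∩ RIn j ⊆
      {x : ℕ → ℝ | ∀ i, i < m → x i ∈ Bset n k i} := fun x hx i _ => hx.1 i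
  calc μ j ({x | ∀ i, x i ∈ Bset n k i} ∩ RIn j)
      ≤ μ j {x | ∀ i, i < m → x i ∈ Bset n k i} := measure_mono h1
    _ = (∏ i ∈ Finset.range j, volume (Bset n k i)) *
        ∏ i ∈ Finset.Ico j m, volume (Bset n k i ∩ Icube) :=
          hμ j m (le_max_left j k) _ (Bset_measurable n k)
    _ ≤ c ^ k := by
        rw [Finset.prod_eq_one (fun i _ => vol_Bset_inter n k i), mul_one]
        have heq : ∀ i ∈ Finset.range j, volume (Bset n k i) =
            if i < k then c else 1 := fun i _ => vol_Bset n k i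
        rw [Finset.prod_congr rfl heq, Finset.prod_ite, Finset.prod_const,
          Finset.prod_const, one_pow, mul_one]
        have hcard : ((Finset.range j).filter (· < k)).card ≤ k := by
          have : (Finset.range j).filter (· < k) ⊆ Finset.range k := by
            intro i hi
            simp only [Finset.mem_filter, Finset.mem_range] at hi ⊢
            exact hi.2
          simpa using Finset.card_le_card this
        exact pow_le_pow_right₀ hc1 hcard


/-- the measure `m(A) = sup_k μₖ(A ∩ ℝ_I^k)` is σ-finite: `ℝ^ℕ` is the
union of countably many Borel sets of finite `m`-measure together with an `m`-null
Borel set. -/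
theorem mSup_sigma_finite
    (μ : ℕ → Measure (ℕ → ℝ)) (hμ : ∀ k, IsProdWithUniform k (μ k)) :
    ∃ A : ℕ → Set (ℕ → ℝ), ∃ N : Set (ℕ → ℝ),
      (∀ j, MeasurableSet (A j)) ∧ (∀ j, mSup μ (A j) < ⊤) ∧
      MeasurableSet N ∧ mSup μ N = 0 ∧
      (Set.univ : Set (ℕ → ℝ)) = (⋃ j, A j) ∪ N := by
  refine ⟨fun j => {x | ∀ i, x i ∈ Bset j.unpair.1 j.unpair.2 i},
    (⋃ k, RIn k)ᶜ, ?_, ?_, ?_, ?_, ?_⟩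
  · intro j
    show MeasurableSet {x : ℕ → ℝ | ∀ i, x i ∈ Bset j.unpair.1 j.unpair.2 i}
    have : {x : ℕ → ℝ | ∀ i, x i ∈ Bset j.unpair.1 j.unpair.2 i} =
        ⋂ i, (fun x : ℕ → ℝ => x i) ⁻¹' (Bset j.unpair.1 j.unpair.2 i) := by
      ext x; simp
    rw [this]
    exact MeasurableSet.iInter fun i =>
      (measurable_pi_apply i) (Bset_measurable _ _ i)
  · intro j
    refine lt_of_le_of_lt (iSup_le fun l => mu_bound μ hμ _ _ l) ?_
    exact ENNReal.pow_lt_top ENNReal.ofReal_lt_top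
  · exact (MeasurableSet.iUnion fun k => by
      have : RIn k = ⋂ i, ⋂ (_ : k ≤ i), (fun x : ℕ → ℝ => x i) ⁻¹' Icube := by
        ext x; simp [RIn]
      rw [this]
      exact MeasurableSet.iInter fun i => MeasurableSet.iInter fun _ =>
        (measurable_pi_apply i) measurableSet_Icc).compl
  · have h : ∀ k, (⋃ l, RIn l)ᶜ ∩ RIn k = ∅ := fun k =>
      Set.eq_empty_iff_forall_notMem.mpr fun x hx => hx.1 (Set.mem_iUnion.mpr ⟨k, hx.2⟩)
    simp only [mSup, h, measure_empty, ciSup_const]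
  · ext x
    simp only [Set.mem_univ, true_iff, Set.mem_union, Set.mem_iUnion, Set.mem_compl_iff]
    by_cases hx : x ∈ ⋃ k, RIn k
    · left
      obtain ⟨k, hk⟩ := Set.mem_iUnion.mp hx
      obtain ⟨n, hn⟩ : ∃ n : ℕ, ∀ i, i < k → |x i| ≤ (n : ℝ) := by
        refine ⟨(Finset.range k).sup fun i => ⌈|x i|⌉₊, fun i hik => ?_⟩
        calc |x i| ≤ (⌈|x i|⌉₊ : ℝ) := Nat.le_ceil _
          _ ≤ _ := Nat.cast_le.mpr (Finset.le_sup (f := fun i => ⌈|x i|⌉₊) (Finset.mem_range.mpr hik))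
      refine ⟨Nat.pair n k, fun i => ?_⟩
      rw [Nat.unpair_pair]
      show x i ∈ Bset n k i
      unfold Bset
      split
      · rename_i hik
        have h1 := abs_le.mp (hn i hik)
        exact ⟨by linarith [h1.1], by linarith [h1.2]⟩
      · exact hk i (le_of_not_gt ‹¬ i < k›)
    · right
      simpa using hx
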